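/- Fix an integer m ≥ 1, set ℓ := ⌊m/2⌋ and μ_0 := 1, and let (μ_1, …, μ_m) ∈ ℝ^m be such that the Hankel matrix (μ_{i+j})_{0 ≤ i,j ≤ ℓ} is positive definite. Then for every ε > 0 there exists a continuous real-valued random variable Z (law absolutely continuous with respect to Lebesgue measure) such that |E[Z^k] − μ_k| < ε for every k ∈ {0, 1, …, m}. -/

import Mathlib

open MeasureTheory Polynomial

lemma sos_aux : ∀ n : ℕ, ∀ P : ℝ[X], P.natDegree ≤ n → (∀ x : ℝ, 0 ≤ P.eval x) →
    ∃ a b : ℝ[X], P = a ^ 2 + b ^ 2 ∧ 2 * a.natDegree ≤ P.natDegree ∧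
      2 * b.natDegree ≤ P.natDegree := by
  intro n
  induction n with
  | zero =>
    intro P hdeg hnn
    have h0 : P = C (P.coeff 0) := eq_C_of_natDegree_le_zero hdeg
    have hc : 0 ≤ P.coeff 0 := by
      have := hnn 0
      rwa [h0, eval_C] at this
    refine ⟨C (Real.sqrt (P.coeff 0)), 0, ?_, by simp, by simp⟩
    rw [h0]
    simp [← C_pow, Real.sq_sqrt hc]
  | succ n ih =>
    intro P hdeg hnn
    by_cases hle : P.natDegree ≤ n
    · exact ih P hle hnn
    have hdeg' : P.natDegree = n + 1 := le_antisymm hdeg (by omega)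
    have hP0 : P ≠ 0 := fun h => by simp [h] at hdeg'
    by_cases hroot : ∃ r : ℝ, P.eval r = 0
    · obtain ⟨r, hr⟩ := hroot
      set k := P.rootMultiplicity r with hk
      have hk1 : 1 ≤ k := (P.rootMultiplicity_pos hP0).2 hr
      set R := P /ₘ (X - C r) ^ k with hR
      have hfac : (X - C r) ^ k * R = P := P.pow_mul_divByMonic_rootMultiplicity_eq r
      have hRr : R.eval r ≠ 0 := eval_divByMonic_pow_rootMultiplicity_ne_zero r hP0
      -- k is even
      have hkeven : Even k := by
        by_contra hodd
        rw [Nat.not_even_iff_odd] at hodd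
        have hcont : Continuous fun t : ℝ => R.eval t * R.eval r :=
          (R.continuous).mul continuous_const
        have hev : ∀ᶠ t in nhds r, 0 < R.eval t * R.eval r :=
          continuous_const.continuousAt.eventually_lt hcont.continuousAt
            (mul_self_pos.2 hRr)
        obtain ⟨δ, hδ, hball⟩ := Metric.eventually_nhds_iff.1 hev
        rcases lt_or_gt_of_ne hRr with hneg | hpos
        · -- R.eval r < 0 : take t = r + δ/2
          set t := r + δ/2 with ht
          have htb : dist t r < δ := by
            rw [Real.dist_eq, ht, show r + δ/2 - r = δ/2 by ring,
              abs_of_pos (by linarith : (0:ℝ) < δ/2)]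
            linarith
          have h1 : 0 < R.eval t * R.eval r := hball htb
          have hRt : R.eval t < 0 := by nlinarith
          have : P.eval t < 0 := by
            rw [← hfac, eval_mul, eval_pow, eval_sub, eval_X, eval_C]
            have : (0:ℝ) < (t - r) ^ k := by
              apply pow_pos; rw [ht]; linarith
            nlinarith
          exact absurd (hnn t) (not_le.2 this)
        · -- R.eval r > 0 : take t = r - δ/2
          set t := r - δ/2 with ht
          have htb : dist t r < δ := by
            rw [Real.dist_eq, ht, show r - δ/2 - r = -(δ/2) by ring, abs_neg,
              abs_of_pos (by linarith : (0:ℝ) < δ/2)]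
            linarith
          have h1 : 0 < R.eval t * R.eval r := hball htb
          have hRt : 0 < R.eval t := by nlinarith
          have : P.eval t < 0 := by
            rw [← hfac, eval_mul, eval_pow, eval_sub, eval_X, eval_C]
            have hneg : (t - r) ^ k < 0 := by
              exact Odd.pow_neg hodd (by rw [ht]; linarith)
            nlinarith
          exact absurd (hnn t) (not_le.2 this)
      have hk2 : 2 ≤ k := by
        rcases hkeven with ⟨j, hj⟩; omega
      set P₁ := (X - C r) ^ (k - 2) * R with hP₁
      have hfac2 : P = (X - C r) ^ 2 * P₁ := by
        rw [hP₁, ← mul_assoc, ← pow_add, show 2 + (k-2) = k by omega, hfac]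
      have hP₁0 : P₁ ≠ 0 := by
        intro h; rw [h, mul_zero] at hfac2; exact hP0 hfac2
      have hdegP₁ : P.natDegree = 2 + P₁.natDegree := by
        rw [hfac2, natDegree_mul (pow_ne_zero _ (X_sub_C_ne_zero r)) hP₁0]
        congr 1
        simp [natDegree_pow]
      -- P₁ is nonnegative
      have hP₁nn : ∀ x : ℝ, 0 ≤ P₁.eval x := by
        have hne : ∀ x : ℝ, x ≠ r → 0 ≤ P₁.eval x := by
          intro x hx
          have h1 := hnn x
          rw [hfac2, eval_mul, eval_pow, eval_sub, eval_X, eval_C] at h1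
          have h3 : x - r ≠ 0 := sub_ne_zero.2 hx
          have h2 : (0:ℝ) < (x - r)^2 :=
            lt_of_le_of_ne (sq_nonneg _) (Ne.symm (pow_ne_zero 2 h3))
          nlinarith
        intro x
        by_contra hneg
        push_neg at hneg
        have hev : ∀ᶠ t in nhds x, P₁.eval t < 0 :=
          (P₁.continuous).continuousAt.eventually_lt continuous_const.continuousAt hneg
        obtain ⟨δ, hδ, hball⟩ := Metric.eventually_nhds_iff.1 hev
        rcases eq_or_ne x r with rfl | hxr
        · have h5 : P₁.eval (x + δ/2) < 0 := hball (by
            rw [Real.dist_eq, show x + δ/2 - x = δ/2 by ring,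
              abs_of_pos (by linarith : (0:ℝ) < δ/2)]; linarith)
          exact absurd (hne (x + δ/2) (by intro h; linarith)) (not_le.2 h5)
        · exact absurd (hne x hxr) (not_le.2 hneg)
      obtain ⟨a₁, b₁, hab, ha₁, hb₁⟩ := ih P₁ (by omega) hP₁nn
      refine ⟨(X - C r) * a₁, (X - C r) * b₁, ?_, ?_, ?_⟩
      · rw [hfac2, hab]; ring
      · calc 2 * ((X - C r) * a₁).natDegree ≤ 2 * ((X - C r).natDegree + a₁.natDegree) := by
              have := natDegree_mul_le (p := X - C r) (q := a₁); omega
          _ ≤ P.natDegree := by rw [natDegree_X_sub_C]; omega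
      · calc 2 * ((X - C r) * b₁).natDegree ≤ 2 * ((X - C r).natDegree + b₁.natDegree) := by
              have := natDegree_mul_le (p := X - C r) (q := b₁); omega
          _ ≤ P.natDegree := by rw [natDegree_X_sub_C]; omega
    · -- no real root
      push_neg at hroot
      have hpos : ∀ x : ℝ, 0 < P.eval x := fun x => lt_of_le_of_ne (hnn x) (Ne.symm (hroot x))
      have hdpos : 0 < P.degree := natDegree_pos_iff_degree_pos.1 (by omega)
      obtain ⟨z, hz⟩ : ∃ z : ℂ, (Polynomial.aeval z) P = 0 :=
        IsAlgClosed.exists_aeval_eq_zero ℂ P hdpos.ne'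
      have hz0 : z.im ≠ 0 := by
        intro him
        have : z = (z.re : ℂ) := Complex.ext rfl (by simp [him])
        rw [this] at hz
        erw [aeval_ofReal, RCLike.ofReal_eq_zero] at hz
        exact hroot z.re hz
      obtain ⟨P₂, hfac⟩ := P.quadratic_dvd_of_aeval_eq_zero_im_ne_zero hz hz0
      set q : ℝ[X] := X ^ 2 - C (2 * z.re) * X + C (‖z‖ ^ 2) with hqdef
      have hnorm : ‖z‖^2 = z.re^2 + z.im^2 := by
        rw [Complex.sq_norm, Complex.normSq_apply]; ring
      have hq : q = (X - C z.re) ^ 2 + (C z.im) ^ 2 := by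
        rw [hqdef, hnorm]
        simp only [C_add, C_mul, C_pow, map_ofNat]
        ring
      have hqev : ∀ x : ℝ, 0 < q.eval x := by
        intro x
        rw [hq]
        simp only [eval_add, eval_pow, eval_sub, eval_X, eval_C]
        have : z.im ^ 2 > 0 := by positivity
        nlinarith [sq_nonneg (x - z.re)]
      have hq0 : q ≠ 0 := fun h => by simpa [h] using hqev 0
      have hP₂0 : P₂ ≠ 0 := by
        intro h; rw [h, mul_zero] at hfac; exact hP0 hfac
      have hqdeg : q.natDegree = 2 := by
        rw [hqdef]; compute_degree!
      have hdegP₂ : P.natDegree = 2 + P₂.natDegree := by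
        rw [hfac, natDegree_mul hq0 hP₂0, hqdeg]
      have hP₂nn : ∀ x : ℝ, 0 ≤ P₂.eval x := by
        intro x
        have h1 := hnn x
        rw [hfac, eval_mul] at h1
        nlinarith [hqev x]
      obtain ⟨a₂, b₂, hab, ha₂, hb₂⟩ := ih P₂ (by omega) hP₂nn
      refine ⟨(X - C z.re) * a₂ - C z.im * b₂, (X - C z.re) * b₂ + C z.im * a₂, ?_, ?_, ?_⟩
      · rw [hfac, hq, hab]; ring
      · have h1 : ((X - C z.re) * a₂ - C z.im * b₂).natDegree ≤
            max ((X - C z.re) * a₂).natDegree ((C z.im * b₂).natDegree) := natDegree_sub_le _ _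
        have h2 := natDegree_mul_le (p := X - C z.re) (q := a₂)
        have h3 := natDegree_mul_le (p := C z.im) (q := b₂)
        rw [natDegree_X_sub_C] at h2
        rw [natDegree_C] at h3
        omega
      · have h1 : ((X - C z.re) * b₂ + C z.im * a₂).natDegree ≤
            max ((X - C z.re) * b₂).natDegree ((C z.im * a₂).natDegree) := natDegree_add_le _ _
        have h2 := natDegree_mul_le (p := X - C z.re) (q := b₂)
        have h3 := natDegree_mul_le (p := C z.im) (q := a₂)
        rw [natDegree_X_sub_C] at h2
        rw [natDegree_C] at h3
        omega

lemma unif_facts (x δ : ℝ) (hδ : 0 < δ) :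
    ∃ ν : Measure ℝ, IsProbabilityMeasure ν ∧ ν ≪ volume ∧
      (∀ k : ℕ, Integrable (fun t : ℝ => t ^ k) ν) ∧
      (∀ᵐ t ∂ν, t ∈ Set.Icc (x - δ) (x + δ)) := by
  have h2δ : (0:ℝ) < 2 * δ := by linarith
  have hne0 : ENNReal.ofReal (2 * δ) ≠ 0 := (ENNReal.ofReal_pos.2 h2δ).ne'
  have hnetop : ENNReal.ofReal (2 * δ) ≠ ⊤ := ENNReal.ofReal_ne_top
  set ν : Measure ℝ :=
    (ENNReal.ofReal (2 * δ))⁻¹ • volume.restrict (Set.Icc (x - δ) (x + δ)) with hν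
  have hvol : volume (Set.Icc (x - δ) (x + δ)) = ENNReal.ofReal (2 * δ) := by
    rw [Real.volume_Icc]; congr 1; ring
  refine ⟨ν, ⟨?_⟩, ?_, ?_, ?_⟩
  · rw [hν, Measure.smul_apply, Measure.restrict_apply_univ, hvol, smul_eq_mul,
      ENNReal.inv_mul_cancel hne0 hnetop]
  · intro s hs
    rw [hν, Measure.smul_apply, Measure.restrict_apply' measurableSet_Icc]
    rw [measure_mono_null Set.inter_subset_left hs]
    simp
  · intro k
    have h1 : IntegrableOn (fun t : ℝ => t ^ k) (Set.Icc (x - δ) (x + δ)) volume :=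
      (continuous_pow k).integrableOn_Icc
    exact h1.smul_measure (ENNReal.inv_ne_top.2 hne0)
  · exact Measure.ae_smul_measure (ae_restrict_mem measurableSet_Icc) _

lemma L_mul_eq (m : ℕ) (μ : ℕ → ℝ) (a b : ℝ[X])
    (ha : a.natDegree ≤ m / 2) (hb : b.natDegree ≤ m / 2) :
    ∑ k ∈ Finset.range (m + 1), (a * b).coeff k * μ k
      = ∑ i ∈ Finset.range (m / 2 + 1), ∑ j ∈ Finset.range (m / 2 + 1),
          a.coeff i * b.coeff j * μ (i + j) := by
  have hab : a * b = ∑ i ∈ Finset.range (m / 2 + 1), ∑ j ∈ Finset.range (m / 2 + 1),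
      C (a.coeff i * b.coeff j) * X ^ (i + j) := by
    conv_lhs => rw [a.as_sum_range' (m / 2 + 1) (by omega),
      b.as_sum_range' (m / 2 + 1) (by omega)]
    rw [Finset.sum_mul_sum]
    refine Finset.sum_congr rfl fun i _ => Finset.sum_congr rfl fun j _ => ?_
    rw [← C_mul_X_pow_eq_monomial, ← C_mul_X_pow_eq_monomial, C_mul, pow_add]; ring
  calc ∑ k ∈ Finset.range (m + 1), (a * b).coeff k * μ k
      = ∑ k ∈ Finset.range (m + 1), ∑ i ∈ Finset.range (m / 2 + 1),
          ∑ j ∈ Finset.range (m / 2 + 1),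
            (C (a.coeff i * b.coeff j) * X ^ (i + j)).coeff k * μ k := by
        refine Finset.sum_congr rfl fun k _ => ?_
        rw [hab, finset_sum_coeff, Finset.sum_mul]
        refine Finset.sum_congr rfl fun i _ => ?_
        rw [finset_sum_coeff, Finset.sum_mul]
    _ = ∑ i ∈ Finset.range (m / 2 + 1), ∑ j ∈ Finset.range (m / 2 + 1),
          ∑ k ∈ Finset.range (m + 1),
            (C (a.coeff i * b.coeff j) * X ^ (i + j)).coeff k * μ k := by
        rw [Finset.sum_comm]
        exact Finset.sum_congr rfl fun i _ => Finset.sum_comm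
    _ = ∑ i ∈ Finset.range (m / 2 + 1), ∑ j ∈ Finset.range (m / 2 + 1),
          a.coeff i * b.coeff j * μ (i + j) := by
        refine Finset.sum_congr rfl fun i hi => Finset.sum_congr rfl fun j hj => ?_
        rw [Finset.mem_range] at hi hj
        rw [Finset.sum_eq_single_of_mem (i + j)
          (Finset.mem_range.2 (by omega : i + j < m + 1))]
        · rw [coeff_C_mul, coeff_X_pow, if_pos rfl, mul_one]
        · intro k _ hk
          rw [coeff_C_mul, coeff_X_pow, if_neg hk, mul_zero, zero_mul]

/-- Let `m ≥ 1`, `ℓ = ⌊m/2⌋`, and `μ : ℕ → ℝ` with `μ 0 = 1` whose Hankel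
matrix `(μ_{i+j})_{0 ≤ i,j ≤ ℓ}` is positive definite. Then for every `ε > 0` there is a
continuous real random variable (a probability law on `ℝ` absolutely continuous w.r.t.
Lebesgue measure) whose `k`-th moment is within `ε` of `μ k` for all `k ≤ m`. -/
theorem exists_continuous_rv_approx_moments
    (m : ℕ) (hm : 1 ≤ m) (μ : ℕ → ℝ) (hμ0 : μ 0 = 1)
    (hpos : (Matrix.of fun i j : Fin (m / 2 + 1) => μ ((i : ℕ) + (j : ℕ))).PosDef) :
    ∀ ε : ℝ, 0 < ε → ∃ ν : Measure ℝ, IsProbabilityMeasure ν ∧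
      ν ≪ MeasureTheory.volume ∧
      ∀ k ≤ m, |(∫ x, x ^ k ∂ν) - μ k| < ε := by
  intro ε hε
  classical
  set S : Set (Fin (m+1) → ℝ) := {v | ∃ ν : Measure ℝ, IsProbabilityMeasure ν ∧ ν ≪ volume ∧
    (∀ k ≤ m, Integrable (fun x : ℝ => x ^ k) ν) ∧
    ∀ k : Fin (m+1), v k = ∫ x, x ^ (k : ℕ) ∂ν} with hSdef
  have hSconv : Convex ℝ S := by
    rintro v₁ ⟨ν₁, hp₁, hac₁, hint₁, hv₁⟩ v₂ ⟨ν₂, hp₂, hac₂, hint₂, hv₂⟩ a b ha hb hab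
    rcases eq_or_lt_of_le ha with rfl | ha'
    · have hb1 : b = 1 := by linarith
      subst hb1
      refine ⟨ν₂, hp₂, hac₂, hint₂, fun k => ?_⟩
      simpa using hv₂ k
    rcases eq_or_lt_of_le hb with rfl | hb'
    · have ha1 : a = 1 := by linarith
      subst ha1
      refine ⟨ν₁, hp₁, hac₁, hint₁, fun k => ?_⟩
      simpa using hv₁ k
    refine ⟨ENNReal.ofReal a • ν₁ + ENNReal.ofReal b • ν₂, ⟨?_⟩, ?_, ?_, ?_⟩
    · rw [Measure.add_apply, Measure.smul_apply, Measure.smul_apply, measure_univ,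
        measure_univ, smul_eq_mul, smul_eq_mul, mul_one, mul_one,
        ← ENNReal.ofReal_add ha hb, hab, ENNReal.ofReal_one]
    · intro s hs
      rw [Measure.add_apply, Measure.smul_apply, Measure.smul_apply, hac₁ hs, hac₂ hs]
      simp
    · intro k hk
      exact ((hint₁ k hk).smul_measure ENNReal.ofReal_ne_top).add_measure
        ((hint₂ k hk).smul_measure ENNReal.ofReal_ne_top)
    · intro k
      have hk : (k : ℕ) ≤ m := by omega
      rw [integral_add_measure ((hint₁ _ hk).smul_measure ENNReal.ofReal_ne_top)
          ((hint₂ _ hk).smul_measure ENNReal.ofReal_ne_top),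
        integral_smul_measure, integral_smul_measure,
        ENNReal.toReal_ofReal ha, ENNReal.toReal_ofReal hb]
      rw [Pi.add_apply, Pi.smul_apply, Pi.smul_apply, hv₁ k, hv₂ k,
        smul_eq_mul, smul_eq_mul]
  set μv : Fin (m+1) → ℝ := fun k => μ (k : ℕ) with hμv
  have hmem : μv ∈ closure S := by
    by_contra hout
    obtain ⟨f, u, hfu, hufx⟩ :=
      geometric_hahn_banach_closed_point hSconv.closure isClosed_closure hout
    set c : Fin (m+1) → ℝ := fun k => f (fun j => if k = j then (1:ℝ) else 0) with hc
    have hfv : ∀ v : Fin (m+1) → ℝ, f v = ∑ k, v k * c k := by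
      intro v
      conv_lhs => rw [pi_eq_sum_univ v]
      rw [map_sum]
      refine Finset.sum_congr rfl fun k _ => ?_
      rw [_root_.map_smul, smul_eq_mul]
    set pf : ℝ → ℝ := fun t => ∑ k : Fin (m+1), c k * t ^ (k : ℕ) with hpf
    have hpfc : Continuous pf :=
      continuous_finset_sum _ fun k _ => continuous_const.mul (continuous_pow _)
    have key : ∀ t : ℝ, pf t ≤ u := by
      intro t
      refine le_of_forall_pos_le_add fun ε' hε' => ?_
      obtain ⟨δ, hδ, hδball⟩ := Metric.continuousAt_iff.1 hpfc.continuousAt ε' hε'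
      obtain ⟨ν, hprob, hac, hint, hae⟩ := unif_facts t (δ/2) (by linarith)
      set v : Fin (m+1) → ℝ := fun k => ∫ s, s ^ (k : ℕ) ∂ν with hv
      have hvS : v ∈ S := ⟨ν, hprob, hac, fun k _ => hint k, fun k => rfl⟩
      have hflt : f v < u := hfu v (subset_closure hvS)
      have hfint : f v = ∫ s, pf s ∂ν := by
        rw [hfv v]
        calc ∑ k, v k * c k = ∑ k : Fin (m+1), ∫ s, s ^ (k : ℕ) * c k ∂ν :=
              Finset.sum_congr rfl fun k _ => (integral_mul_const (c k) _).symm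
          _ = ∫ s, ∑ k : Fin (m+1), s ^ (k : ℕ) * c k ∂ν :=
              (integral_finset_sum Finset.univ
                (f := fun (k : Fin (m+1)) (s : ℝ) => s ^ (k : ℕ) * c k)
                (fun k _ => (hint (k : ℕ)).mul_const _)).symm
          _ = ∫ s, pf s ∂ν := by
              refine integral_congr_ae (Filter.Eventually.of_forall fun s => ?_)
              exact Finset.sum_congr rfl fun k _ => mul_comm _ _
      have hpfint : Integrable pf ν :=
        integrable_finset_sum _ fun k _ => (hint (k : ℕ)).const_mul _
      have hbound : |(∫ s, pf s ∂ν) - pf t| ≤ ε' := by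
        have h2 : (∫ s, pf s ∂ν) - pf t = ∫ s, (pf s - pf t) ∂ν := by
          rw [integral_sub hpfint (integrable_const _), integral_const, probReal_univ,
            smul_eq_mul, one_mul]
        have h3 : ∀ᵐ s ∂ν, ‖pf s - pf t‖ ≤ ε' := by
          refine hae.mono fun s hs => ?_
          have hd : dist s t < δ := by
            rw [Real.dist_eq]
            refine lt_of_le_of_lt (abs_le.2 ⟨by linarith [hs.1], by linarith [hs.2]⟩ :
              |s - t| ≤ δ/2) (by linarith)
          have h4 := le_of_lt (hδball hd)
          rwa [dist_eq_norm] at h4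
        have h5 := norm_integral_le_of_norm_le_const h3
        rw [probReal_univ, mul_one] at h5
        rw [h2, ← Real.norm_eq_abs]
        exact h5
      have h6 := abs_le.1 hbound
      rw [← hfint] at h6
      linarith [h6.1, h6.2, hflt]
    -- the polynomial u - p is nonnegative on ℝ
    set Q : ℝ[X] := C u - ∑ k : Fin (m+1), C (c k) * X ^ (k : ℕ) with hQ
    have hQev : ∀ t : ℝ, Q.eval t = u - pf t := by
      intro t
      rw [hQ, eval_sub, eval_C, eval_finset_sum]
      congr 1
      exact Finset.sum_congr rfl fun k _ => by rw [eval_mul, eval_C, eval_pow, eval_X]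
    have hQnn : ∀ t : ℝ, 0 ≤ Q.eval t := fun t => by rw [hQev]; linarith [key t]
    have hQdeg : Q.natDegree ≤ m := by
      refine le_trans (natDegree_sub_le _ _) (max_le (by simp) ?_)
      refine natDegree_sum_le_of_forall_le _ _ fun k _ => ?_
      exact le_trans (natDegree_C_mul_X_pow_le _ _) (by omega)
    obtain ⟨A, B, hQAB, hA, hB⟩ := sos_aux m Q hQdeg hQnn
    have hA2 : A.natDegree ≤ m / 2 := by omega
    have hB2 : B.natDegree ≤ m / 2 := by omega
    have hsq : ∀ p : ℝ[X], p.natDegree ≤ m / 2 →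
        0 ≤ ∑ k ∈ Finset.range (m+1), (p * p).coeff k * μ k := by
      intro p hp
      rw [L_mul_eq m μ p p hp hp]
      have hw := hpos.posSemidef.dotProduct_mulVec_nonneg (fun i : Fin (m/2+1) => p.coeff (i : ℕ))
      refine le_trans hw (le_of_eq ?_)
      have hstep : ∑ i ∈ Finset.range (m/2+1), ∑ j ∈ Finset.range (m/2+1),
            p.coeff i * p.coeff j * μ (i + j)
          = ∑ i : Fin (m/2+1), ∑ j : Fin (m/2+1),
            p.coeff (i : ℕ) * p.coeff (j : ℕ) * μ ((i : ℕ) + (j : ℕ)) := by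
        rw [← Fin.sum_univ_eq_sum_range
          (fun i => ∑ j ∈ Finset.range (m/2+1), p.coeff i * p.coeff j * μ (i + j))]
        exact Finset.sum_congr rfl fun i _ =>
          (Fin.sum_univ_eq_sum_range (fun j => p.coeff (i:ℕ) * p.coeff j * μ ((i:ℕ) + j)) (m/2+1)).symm
      rw [hstep]
      simp only [dotProduct, Matrix.mulVec, Matrix.of_apply, Pi.star_apply,
        star_trivial, Finset.mul_sum]
      exact Finset.sum_congr rfl fun i _ => Finset.sum_congr rfl fun j _ => by ring
    have hLQ : ∑ k ∈ Finset.range (m+1), Q.coeff k * μ k = u - f μv := by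
      have h0 : ∀ k, Q.coeff k
          = (C u).coeff k - ∑ j : Fin (m+1), (C (c j) * X ^ (j : ℕ)).coeff k := by
        intro k
        rw [hQ, coeff_sub, finset_sum_coeff]
      simp only [h0, sub_mul, Finset.sum_sub_distrib, Finset.sum_mul]
      congr 1
      · rw [Finset.sum_eq_single_of_mem 0 (Finset.mem_range.2 (by omega))]
        · simp [coeff_C, hμ0]
        · intro k _ hk
          simp [coeff_C, hk]
      · rw [Finset.sum_comm, hfv μv]
        refine Finset.sum_congr rfl fun j _ => ?_
        rw [Finset.sum_eq_single_of_mem ((j : ℕ)) (Finset.mem_range.2 (by omega))]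
        · rw [coeff_C_mul, coeff_X_pow, if_pos rfl, mul_one, hμv, mul_comm]
        · intro k _ hk
          rw [coeff_C_mul, coeff_X_pow, if_neg hk, mul_zero, zero_mul]
    have hLQ2 : ∑ k ∈ Finset.range (m+1), Q.coeff k * μ k
        = (∑ k ∈ Finset.range (m+1), (A*A).coeff k * μ k)
          + ∑ k ∈ Finset.range (m+1), (B*B).coeff k * μ k := by
      rw [← Finset.sum_add_distrib]
      refine Finset.sum_congr rfl fun k _ => ?_
      rw [show Q = A*A + B*B by rw [hQAB]; ring, coeff_add, add_mul]
    have hfinal : (0:ℝ) ≤ u - f μv := by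
      rw [← hLQ, hLQ2]
      exact add_nonneg (hsq A hA2) (hsq B hB2)
    linarith [hufx]
  obtain ⟨v, hvS, hvd⟩ := Metric.mem_closure_iff.1 hmem ε hε
  obtain ⟨ν, hprob, hac, hint, hv⟩ := hvS
  refine ⟨ν, hprob, hac, fun k hk => ?_⟩
  have hklt : k < m + 1 := by omega
  have h1 : dist (μv ⟨k, hklt⟩) (v ⟨k, hklt⟩) ≤ dist μv v := dist_le_pi_dist μv v ⟨k, hklt⟩
  have h2 : v ⟨k, hklt⟩ = ∫ x, x ^ k ∂ν := hv ⟨k, hklt⟩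
  have h3 : μv ⟨k, hklt⟩ = μ k := rfl
  rw [Real.dist_eq, h2, h3] at h1
  calc |(∫ x, x ^ k ∂ν) - μ k| = |μ k - ∫ x, x ^ k ∂ν| := abs_sub_comm _ _
    _ ≤ dist μv v := h1
    _ < ε := hvd
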